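/- Let A = P₁Q₁ and B = P₂Q₂ be (n+1)×(n+1) matrices over the tropical semiring, where P₁, P₂ are (n+1)×n real matrices, Q₁, Q₂ are n×(n+1) real matrices, and all products are tropical. Suppose U and V are words in the free semigroup on two letters {x,y} such that U(A',B') = V(A',B') holds for all n×n tropical matrices A', B'. Then U(AA, AB)·A = V(AA, AB)·A, where all products are tropical matrix products. -/

import Mathlib

/-- Tropical (min-plus) matrix product. -/
noncomputable def tropMul {l m o : Type*} [Fintype m] [Nonempty m]
    (A : Matrix l m ℝ) (B : Matrix m o ℝ) : Matrix l o ℝ :=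
  fun i j => Finset.univ.inf' Finset.univ_nonempty fun t => A i t + B t j

/-- Evaluation of a word over `{x, y}` (here `true` stands for `x`, `false` for `y`)
as a tropical matrix product; the empty word evaluates to the junk value `A`. -/
noncomputable def evalWord {n : ℕ} [NeZero n] (A B : Matrix (Fin n) (Fin n) ℝ) :
    List Bool → Matrix (Fin n) (Fin n) ℝ
  | [] => A
  | b :: t => t.foldl (fun M c => tropMul M (cond c A B)) (cond b A B)

/-- Tropical matrix power (`tropPow A k` is `A^k` for `k ≥ 1`; `A^0` is junk `= A`). -/
noncomputable def tropPow {n : ℕ} [NeZero n] (A : Matrix (Fin n) (Fin n) ℝ) (k : ℕ) :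
    Matrix (Fin n) (Fin n) ℝ :=
  evalWord A A (List.replicate k true)

/-- Tropical permanent. -/
noncomputable def tropPerm {n : ℕ} (A : Matrix (Fin n) (Fin n) ℝ) : ℝ :=
  Finset.univ.inf' Finset.univ_nonempty fun σ : Equiv.Perm (Fin n) => ∑ i, A i (σ i)

/-- `Σ(A)`: the set of permutations attaining the tropical permanent. -/
def minPerms {n : ℕ} (A : Matrix (Fin n) (Fin n) ℝ) : Set (Equiv.Perm (Fin n)) :=
  { σ | ∑ i, A i (σ i) = tropPerm A }

/-- A matrix is sign-nonsingular if all permutations in `Σ(A)` have the same parity. -/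
def SignNonsingular {n : ℕ} (A : Matrix (Fin n) (Fin n) ℝ) : Prop :=
  ∀ σ ∈ minPerms A, ∀ τ ∈ minPerms A, Equiv.Perm.sign σ = Equiv.Perm.sign τ

/-- A matrix is sign-singular if `Σ(A)` contains two permutations of different parity. -/
def SignSingular {n : ℕ} (A : Matrix (Fin n) (Fin n) ℝ) : Prop :=
  ∃ σ ∈ minPerms A, ∃ τ ∈ minPerms A, Equiv.Perm.sign σ ≠ Equiv.Perm.sign τ

/-- Similarity transformation determined by `s`. -/
def simTrans {n : ℕ} (s : Fin n → ℝ) (C : Matrix (Fin n) (Fin n) ℝ) :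
    Matrix (Fin n) (Fin n) ℝ :=
  fun i j => C i j + s i - s j

/-- Diagonally `H`-dominant matrix. -/
def DiagDominant {n : ℕ} (H : ℝ) (A : Matrix (Fin n) (Fin n) ℝ) : Prop :=
  ∀ i j, A i j ≥ max (A i i) (A j j) + H * |A i i - A j j|

/-- Diagonally `H`-dominant pair of matrices. -/
def DiagDomPair {n : ℕ} (H : ℝ) (A B : Matrix (Fin n) (Fin n) ℝ) : Prop :=
  (∀ i, A i i = B i i) ∧ DiagDominant H (fun i j => min (A i j) (B i j))

lemma inf'_add_const {β : Type*} (s : Finset β) (H : s.Nonempty) (f : β → ℝ) (a : ℝ) :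
    s.inf' H f + a = s.inf' H fun b => f b + a :=
  Finset.apply_inf'_eq_inf'_comp H (· + a) (fun x y => (min_add_add_right x y a).symm)

lemma const_add_inf' {β : Type*} (s : Finset β) (H : s.Nonempty) (f : β → ℝ) (a : ℝ) :
    a + s.inf' H f = s.inf' H fun b => a + f b :=
  Finset.apply_inf'_eq_inf'_comp H (a + ·) (fun x y => (min_add_add_left a x y).symm)

lemma tropMul_assoc {l m o p : Type*} [Fintype m] [Nonempty m] [Fintype o] [Nonempty o]
    (A : Matrix l m ℝ) (B : Matrix m o ℝ) (C : Matrix o p ℝ) :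
    tropMul (tropMul A B) C = tropMul A (tropMul B C) := by
  funext i j
  show Finset.univ.inf' _ (fun s => tropMul A B i s + C s j)
      = Finset.univ.inf' _ (fun t => A i t + tropMul B C t j)
  simp only [tropMul, inf'_add_const, const_add_inf']
  rw [Finset.inf'_comm]
  congr 1; funext t; congr 1; funext s; ring

lemma evalWord_concat {n : ℕ} [NeZero n] (A B : Matrix (Fin n) (Fin n) ℝ)
    (w : List Bool) (hw : w ≠ []) (c : Bool) :
    evalWord A B (w ++ [c]) = tropMul (evalWord A B w) (cond c A B) := by
  cases w with
  | nil => exact absurd rfl hw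
  | cons b t => simp [evalWord, List.foldl_append]

lemma main_lemma {n : ℕ} [NeZero n]
    (P : Matrix (Fin (n + 1)) (Fin n) ℝ) (Q : Matrix (Fin n) (Fin (n + 1)) ℝ)
    (B : Matrix (Fin (n + 1)) (Fin (n + 1)) ℝ)
    (w : List Bool) (hw : w ≠ []) :
    tropMul (evalWord (tropMul (tropMul P Q) (tropMul P Q))
        (tropMul (tropMul P Q) B) w) (tropMul P Q) =
      tropMul P (tropMul
        (evalWord (tropMul Q (tropMul (tropMul P Q) P)) (tropMul Q (tropMul B P)) w) Q) := by
  set A := tropMul P Q with hA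
  set A' := tropMul Q (tropMul A P) with hA'
  set B' := tropMul Q (tropMul B P) with hB'
  induction w using List.reverseRecOn with
  | nil => exact absurd rfl hw
  | append_singleton t c ih =>
    rcases eq_or_ne t [] with rfl | ht
    · -- w = [c]
      cases c <;>
        simp only [evalWord, List.nil_append, List.foldl_nil, cond_true, cond_false, hA', hB', hA]
      · -- c = false : (A·B)·A = P·((Q·(B·P))·Q)
        rw [tropMul_assoc A B A, hA, ← tropMul_assoc B P Q, tropMul_assoc P Q _,
          ← tropMul_assoc Q (tropMul B P) Q]
      · -- c = true
        rw [tropMul_assoc A A A, hA, ← tropMul_assoc A P Q, tropMul_assoc P Q _,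
          ← tropMul_assoc Q (tropMul A P) Q, ← hA]
    · rw [evalWord_concat _ _ t ht c, evalWord_concat _ _ t ht c]
      have key : ∀ X : Matrix (Fin (n+1)) (Fin (n+1)) ℝ,
          tropMul (tropMul (evalWord (tropMul A A) (tropMul A B) t) (tropMul A X)) A
            = tropMul (tropMul P (tropMul (evalWord A' B' t) Q)) (tropMul X A) := by
        intro X
        rw [tropMul_assoc _ (tropMul A X) A, tropMul_assoc A X A, ← tropMul_assoc _ A _, ih ht]
      cases c
      · simp only [cond_false]
        rw [key B, tropMul_assoc P _ _, tropMul_assoc _ Q _]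
        -- (already equal up to assoc)
        rw [hA, ← tropMul_assoc B P Q, ← tropMul_assoc Q (tropMul B P) Q, ← hB',
          tropMul_assoc _ B' Q]
      · simp only [cond_true]
        rw [key A, tropMul_assoc P _ _, tropMul_assoc _ Q _]
        -- (already equal up to assoc)
        rw [hA, ← tropMul_assoc A P Q, ← tropMul_assoc Q (tropMul A P) Q, ← hA',
          tropMul_assoc _ A' Q]

/-- If `A = P₁Q₁`, `B = P₂Q₂` with `P_i` of size `(n+1)×n` and
`Q_i` of size `n×(n+1)`, and the identity `U = V` holds for all `n×n` tropical
matrices, then `U(AA, AB)·A = V(AA, AB)·A`. -/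
theorem stmt7 {n : ℕ} [NeZero n]
    (P₁ P₂ : Matrix (Fin (n + 1)) (Fin n) ℝ) (Q₁ Q₂ : Matrix (Fin n) (Fin (n + 1)) ℝ)
    (U V : List Bool) (hU : U ≠ []) (hV : V ≠ [])
    (hid : ∀ A' B' : Matrix (Fin n) (Fin n) ℝ, evalWord A' B' U = evalWord A' B' V) :
    tropMul (evalWord (tropMul (tropMul P₁ Q₁) (tropMul P₁ Q₁))
        (tropMul (tropMul P₁ Q₁) (tropMul P₂ Q₂)) U) (tropMul P₁ Q₁) =
      tropMul (evalWord (tropMul (tropMul P₁ Q₁) (tropMul P₁ Q₁))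
        (tropMul (tropMul P₁ Q₁) (tropMul P₂ Q₂)) V) (tropMul P₁ Q₁) := by
  rw [main_lemma P₁ Q₁ (tropMul P₂ Q₂) U hU, main_lemma P₁ Q₁ (tropMul P₂ Q₂) V hV, hid]
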